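/- Scalar reduction for linear models (Theorem A.1 with Γ = Π = all finitely supported distributions): let l : ℝ × ℝ → ℝ be differentiable in its first argument with partial derivative l', let w ∈ ℝ^d, and for (x,y) ∈ ℝ^d × ℝ set g(x,y) = l'(⟨w,x⟩, y)·x. Let μ be a finitely supported probability measure on ℝ^d × ℝ with c := ⟨w, g(μ)⟩ ≠ 0, and let λ ∈ [0,1]. Then there exists a finitely supported probability measure ν on ℝ^d × ℝ with (1−λ)·g(μ) + λ·g(ν) = 0 if and only if there exists a finitely supported probability measure ν' on ℝ^d × ℝ with (1−λ)·c + λ·E_{(x,y)∼ν'}[⟨w,x⟩·l'(⟨w,x⟩, y)] = 0. -/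

import Mathlib

open scoped RealInnerProductSpace BigOperators

/-- A finitely supported probability measure, represented as a finitely supported
weight function which is nonnegative and sums to 1. -/
def IsFinProb {Z : Type*} (p : Z →₀ ℝ) : Prop :=
  (∀ z, 0 ≤ p z) ∧ p.sum (fun _ w => w) = 1

/-- Expectation `E_{z ∼ p}[g z]` of a vector-valued map under a finitely supported measure. -/
noncomputable def expect {Z E : Type*} [AddCommMonoid E] [Module ℝ E]
    (p : Z →₀ ℝ) (g : Z → E) : E :=
  p.sum fun z w => w • g z

/-- Pointwise gradient `g(x,y) = l'(⟨w,x⟩, y)·x` of the linear-model loss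
`ℓ((x,y); w) = l(⟨w,x⟩, y)`. -/
noncomputable def glin {d : ℕ} (l' : ℝ → ℝ → ℝ) (w : EuclideanSpace ℝ (Fin d))
    (p : EuclideanSpace ℝ (Fin d) × ℝ) : EuclideanSpace ℝ (Fin d) :=
  l' ⟪w, p.1⟫ p.2 • p.1

lemma inner_expect {d : ℕ} {Z : Type*} (w : EuclideanSpace ℝ (Fin d))
    (ν : Z →₀ ℝ) (g : Z → EuclideanSpace ℝ (Fin d)) :
    ⟪w, expect ν g⟫ = expect ν (fun z => ⟪w, g z⟫) := by
  simp [expect, Finsupp.sum, inner_sum, real_inner_smul_right, smul_eq_mul, Finset.mul_sum]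

lemma expect_mapDomain {Z : Type*} {E : Type*} [AddCommMonoid E] [Module ℝ E]
    (ν : Z →₀ ℝ) (φ : Z → Z) (g : Z → E) :
    expect (ν.mapDomain φ) g = expect ν (fun z => g (φ z)) := by
  classical
  unfold expect
  rw [Finsupp.sum_mapDomain_index] <;> simp [add_smul]

/-- scalar reduction for linear models (Theorem A.1 with
Γ = Π = all finitely supported distributions): the vector-valued gradient-cancellation
problem is solvable iff the scalar one (obtained by pairing with `w`) is solvable. -/
theorem stmt11 {d : ℕ} (l : ℝ → ℝ → ℝ) (l' : ℝ → ℝ → ℝ)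
    (hl : ∀ (t y : ℝ), HasDerivAt (fun s => l s y) (l' t y) t)
    (w : EuclideanSpace ℝ (Fin d))
    (μ : (EuclideanSpace ℝ (Fin d) × ℝ) →₀ ℝ) (hμ : IsFinProb μ)
    (hc : ⟪w, expect μ (glin l' w)⟫ ≠ 0)
    (lam : ℝ) (h0 : 0 ≤ lam) (h1 : lam ≤ 1) :
    (∃ ν : (EuclideanSpace ℝ (Fin d) × ℝ) →₀ ℝ, IsFinProb ν ∧
        (1 - lam) • expect μ (glin l' w) + lam • expect ν (glin l' w) = 0) ↔
    (∃ ν' : (EuclideanSpace ℝ (Fin d) × ℝ) →₀ ℝ, IsFinProb ν' ∧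
        (1 - lam) * ⟪w, expect μ (glin l' w)⟫ +
          lam * expect ν' (fun p => ⟪w, p.1⟫ * l' ⟪w, p.1⟫ p.2) = 0) := by
  
  classical
  have hinner := fun (ν : (EuclideanSpace ℝ (Fin d) × ℝ) →₀ ℝ) =>
    inner_expect w ν (glin l' w)
  have hfun : ∀ (ν : (EuclideanSpace ℝ (Fin d) × ℝ) →₀ ℝ),
      expect ν (fun z => (⟪w, glin l' w z⟫ : ℝ)) =
      expect ν (fun p => ⟪w, p.1⟫ * l' ⟪w, p.1⟫ p.2) := by
    intro ν
    unfold expect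
    apply Finsupp.sum_congr
    intro p _
    simp only [glin, real_inner_smul_right, smul_eq_mul]
    ring
  constructor
  · rintro ⟨ν, hν, h⟩
    refine ⟨ν, hν, ?_⟩
    have h2 : ⟪w, (1 - lam) • expect μ (glin l' w) + lam • expect ν (glin l' w)⟫ = (0:ℝ) := by
      rw [h, inner_zero_right]
    rw [inner_add_right, real_inner_smul_right, real_inner_smul_right, hinner ν, hfun ν] at h2
    exact h2
  · rintro ⟨ν', hν', hs⟩
    set S : ℝ := expect ν' (fun p => ⟪w, p.1⟫ * l' ⟪w, p.1⟫ p.2) with hSdef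
    set c : ℝ := ⟪w, expect μ (glin l' w)⟫ with hcdef
    rcases eq_or_ne lam 0 with rfl | hlam
    · exfalso
      simp at hs
      exact hc hs
    set G := expect μ (glin l' w) with hG
    set φ : (EuclideanSpace ℝ (Fin d) × ℝ) → (EuclideanSpace ℝ (Fin d) × ℝ) :=
      fun p => ((⟪w, p.1⟫ / c) • G, p.2) with hφ
    refine ⟨ν'.mapDomain φ, ⟨?_, ?_⟩, ?_⟩
    · intro z
      rw [Finsupp.mapDomain, Finsupp.sum_apply, Finsupp.sum]
      apply Finset.sum_nonneg
      intro a _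
      simp only [Finsupp.single_apply]
      split <;> simp [hν'.1 a]
    · rw [Finsupp.sum_mapDomain_index] <;> simp [hν'.2]
    · rw [expect_mapDomain]
      have hcomp : ∀ p : EuclideanSpace ℝ (Fin d) × ℝ,
          glin l' w (φ p) = ((⟪w, p.1⟫ * l' ⟪w, p.1⟫ p.2) / c) • G := by
        intro p
        simp only [glin, hφ, real_inner_smul_right, div_mul_cancel₀ _ hc, smul_smul]
        rw [← hcdef, div_mul_cancel₀ _ hc]
        ring_nf
      have : expect ν' (fun p => glin l' w (φ p)) =
          ((expect ν' (fun p => ⟪w, p.1⟫ * l' ⟪w, p.1⟫ p.2)) / c) • G := by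
        simp only [hcomp, smul_smul]
        unfold expect Finsupp.sum
        beta_reduce
        simp only [smul_smul]
        rw [← Finset.sum_smul]
        congr 1
        rw [Finset.sum_div]
        exact Finset.sum_congr rfl fun a _ => by simp only [smul_eq_mul]; ring
      rw [this, smul_smul, ← add_smul]
      have hz : (1 - lam) + lam * (S / c) = 0 := by
        field_simp
        linear_combination hs
      rw [hz, zero_smul]
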